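/- Let S be a commutative noetherian ring, let x ∈ S be a non-zerodivisor, and let M ∈ MF(x). Then there exist an integer n ≥ 0 and an exact sequence of S/(x)-modules 0 → M → (S/(x))^n → (S/(x))^n → M → 0; in particular, M is isomorphic to a second syzygy of itself over S/(x). -/
import Mathlib

/-- `MF S x M` : the finitely generated `S`-module `M` is killed by `x` and admits an
exact sequence `0 → S^n → S^m → M → 0`; i.e. `M` belongs to the class `MF(x)`. -/
def MF (S : Type u) [CommRing S] (x : S) (M : Type u) [AddCommGroup M] [Module S M] : Prop :=
  (∀ m : M, x • m = 0) ∧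
    ∃ (n m : ℕ) (f : (Fin n → S) →ₗ[S] (Fin m → S)) (g : (Fin m → S) →ₗ[S] M),
      Function.Injective f ∧ Function.Surjective g ∧ LinearMap.range f = LinearMap.ker g

/-- Promote an `S`-linear map between modules over `S ⧸ I` to an `S ⧸ I`-linear map. -/
def promoteQuot {S : Type u} [CommRing S] (I : Ideal S) {N P : Type u} [AddCommGroup N]
    [Module S N] [AddCommGroup P] [Module S P] [Module (S ⧸ I) N] [Module (S ⧸ I) P]
    [IsScalarTower S (S ⧸ I) N] [IsScalarTower S (S ⧸ I) P] (φ : N →ₗ[S] P) :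
    N →ₗ[S ⧸ I] P where
  toFun := φ
  map_add' := φ.map_add
  map_smul' r v := by
    obtain ⟨s, rfl⟩ := Ideal.Quotient.mk_surjective r
    rw [RingHom.id_apply, ← Ideal.Quotient.algebraMap_eq, algebraMap_smul, algebraMap_smul]
    exact φ.map_smul s v

@[simp] theorem promoteQuot_apply {S : Type u} [CommRing S] (I : Ideal S) {N P : Type u}
    [AddCommGroup N] [Module S N] [AddCommGroup P] [Module S P] [Module (S ⧸ I) N]
    [Module (S ⧸ I) P] [IsScalarTower S (S ⧸ I) N] [IsScalarTower S (S ⧸ I) P]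
    (φ : N →ₗ[S] P) (v : N) : promoteQuot I φ v = φ v := rfl

/-- Proposition 7(3): if `x` is a non-zerodivisor and `M ∈ MF(x)`, then (viewing `M` as a
module over `S/(x)`) there is an exact sequence of `S/(x)`-modules
`0 → M → (S/(x))^n → (S/(x))^n → M → 0`; in particular `M` is isomorphic to a second
syzygy of itself over `S/(x)`. -/
theorem stmt4 {S : Type u} [CommRing S] [IsNoetherianRing S] {x : S}
    (hx : x ∈ nonZeroDivisors S) (M : Type u) [AddCommGroup M] [Module S M]
    [Module.Finite S M] [Module (S ⧸ Ideal.span {x}) M]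
    [IsScalarTower S (S ⧸ Ideal.span {x}) M] (hM : MF S x M) :
    ∃ (n : ℕ)
      (f : M →ₗ[S ⧸ Ideal.span {x}] (Fin n → S ⧸ Ideal.span {x}))
      (g : (Fin n → S ⧸ Ideal.span {x}) →ₗ[S ⧸ Ideal.span {x}]
        (Fin n → S ⧸ Ideal.span {x}))
      (h : (Fin n → S ⧸ Ideal.span {x}) →ₗ[S ⧸ Ideal.span {x}] M),
      Function.Injective f ∧ Function.Surjective h ∧
      LinearMap.range f = LinearMap.ker g ∧ LinearMap.range g = LinearMap.ker h := by
  classical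
  obtain ⟨hx0, n, m, f, g, hf, hg, hfg⟩ := hM
  by_cases hMtriv : Subsingleton M
  · refine ⟨0, 0, 0, 0, fun a b _ => Subsingleton.elim a b,
      fun a => ⟨0, Subsingleton.elim _ _⟩, ?_, ?_⟩ <;>
    · ext v
      have hv : v = 0 := Subsingleton.elim v 0
      subst hv
      simp
  · haveI : Nontrivial M := not_subsingleton_iff_nontrivial.mp hMtriv
    haveI : Nontrivial S := by
      by_contra hS
      rw [not_nontrivial_iff_subsingleton] at hS
      exact hMtriv (Module.subsingleton S M)
    -- x acts injectively componentwise
    have hxinj : ∀ {k : ℕ} (v w : Fin k → S), x • v = x • w → v = w := by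
      intro k v w hvw
      funext i
      have h1 := congrFun hvw i
      simp only [Pi.smul_apply, smul_eq_mul] at h1
      exact (mul_cancel_left_mem_nonZeroDivisors hx).mp h1
    -- construct ψ with f ∘ ψ = x • id
    have hXrange : ∀ v : Fin m → S, (x • LinearMap.id : (Fin m → S) →ₗ[S] Fin m → S) v ∈
        LinearMap.range f := by
      intro v
      rw [hfg, LinearMap.mem_ker]
      simp [hx0]
    set e0 := LinearEquiv.ofInjective f hf with he0
    set ψ : (Fin m → S) →ₗ[S] (Fin n → S) :=
      e0.symm.toLinearMap ∘ₗ LinearMap.codRestrict (LinearMap.range f)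
        (x • LinearMap.id) hXrange with hψdef
    have hfψ : ∀ v, f (ψ v) = x • v := by
      intro v
      have h1 : e0 (ψ v) = ⟨x • v, hXrange v⟩ := e0.apply_symm_apply _
      have h2 := congrArg (Subtype.val) h1
      rwa [LinearEquiv.ofInjective_apply] at h2
    have hψf : ∀ v, ψ (f v) = x • v := by
      intro v
      apply hf
      rw [hfψ, map_smul]
    have hψinj : Function.Injective ψ := by
      intro v w hvw
      apply hxinj
      rw [← hfψ, ← hfψ, hvw]
    -- n = m
    obtain rfl : n = m :=
      le_antisymm (le_of_fin_injective S f hf) (le_of_fin_injective S ψ hψinj)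
    -- reduction mod (x)
    set π : (Fin n → S) →ₗ[S] (Fin n → S ⧸ Ideal.span {x}) :=
      LinearMap.pi fun i => (Algebra.linearMap S (S ⧸ Ideal.span {x})).comp (LinearMap.proj i)
      with hπdef
    have hπ : ∀ (v : Fin n → S) (i : Fin n),
        π v i = Ideal.Quotient.mk (Ideal.span {x}) (v i) := by
      intro v i
      show algebraMap S (S ⧸ Ideal.span {x}) (v i) = _
      rw [Ideal.Quotient.algebraMap_eq]
    have hπsurj : Function.Surjective π := by
      intro w
      choose v hv using fun i => Ideal.Quotient.mk_surjective (w i)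
      exact ⟨v, funext fun i => (hπ v i).trans (hv i)⟩
    have hπzero : ∀ v : Fin n → S, π v = 0 ↔ ∃ u, v = x • u := by
      intro v
      constructor
      · intro hv
        have hdvd : ∀ i, x ∣ v i := by
          intro i
          have h2 : Ideal.Quotient.mk (Ideal.span {x}) (v i) = 0 := by
            rw [← hπ v i, hv]; rfl
          rw [Ideal.Quotient.eq_zero_iff_mem, Ideal.mem_span_singleton] at h2
          exact h2
        choose u hu using hdvd
        exact ⟨u, funext fun i => hu i⟩
      · rintro ⟨u, rfl⟩
        funext i
        rw [hπ]
        simp only [Pi.smul_apply, smul_eq_mul, map_mul, Pi.zero_apply]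
        rw [Ideal.Quotient.eq_zero_iff_mem.mpr (Ideal.mem_span_singleton_self x), zero_mul]
    -- the reduced middle map
    set F : (Fin n → S ⧸ Ideal.span {x}) →ₗ[S ⧸ Ideal.span {x}]
        (Fin n → S ⧸ Ideal.span {x}) :=
      Matrix.mulVecLin ((LinearMap.toMatrix' f).map (Ideal.Quotient.mk (Ideal.span {x})))
      with hFdef
    have hA : ∀ v, (LinearMap.toMatrix' f).mulVec v = f v := by
      intro v
      rw [← Matrix.toLin'_apply, Matrix.toLin'_toMatrix']
    have hFπ : ∀ v, F (π v) = π (f v) := by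
      intro v
      funext i
      rw [hπ, ← hA v]
      show (((LinearMap.toMatrix' f).map (Ideal.Quotient.mk (Ideal.span {x}))).mulVec (π v)) i
        = _
      simp only [Matrix.mulVec, dotProduct, Matrix.map_apply, map_sum]
      refine Finset.sum_congr rfl fun j _ => ?_
      rw [hπ, ← map_mul]
    -- the map (S/(x))^n → M
    have hleg : LinearMap.ker π ≤ LinearMap.ker g := by
      intro v hv
      rw [LinearMap.mem_ker] at hv ⊢
      obtain ⟨u, rfl⟩ := (hπzero v).mp hv
      rw [map_smul, hx0]
    set q := π.quotKerEquivOfSurjective hπsurj with hqdef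
    have hq : ∀ v, q (Submodule.Quotient.mk v) = π v := fun v => rfl
    set gS : (Fin n → S ⧸ Ideal.span {x}) →ₗ[S] M :=
      (Submodule.liftQ (LinearMap.ker π) g hleg) ∘ₗ q.symm.toLinearMap with hgSdef
    have hgS : ∀ v, gS (π v) = g v := by
      intro v
      have h1 : q.symm (π v) = Submodule.Quotient.mk v :=
        (LinearEquiv.symm_apply_eq q).mpr (hq v).symm
      show (Submodule.liftQ (LinearMap.ker π) g hleg) (q.symm (π v)) = g v
      rw [h1, Submodule.liftQ_apply]
    -- the map M → (S/(x))^n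
    have hkill : LinearMap.ker g ≤ LinearMap.ker (π ∘ₗ ψ) := by
      intro v hv
      rw [← hfg] at hv
      obtain ⟨w, rfl⟩ := hv
      rw [LinearMap.mem_ker, LinearMap.comp_apply, hψf]
      exact (hπzero _).mpr ⟨w, rfl⟩
    set qg := g.quotKerEquivOfSurjective hg with hqgdef
    have hqg : ∀ v, qg (Submodule.Quotient.mk v) = g v := fun v => rfl
    set eS : M →ₗ[S] (Fin n → S ⧸ Ideal.span {x}) :=
      (Submodule.liftQ (LinearMap.ker g) (π ∘ₗ ψ) hkill) ∘ₗ qg.symm.toLinearMap with heSdef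
    have heS : ∀ v, eS (g v) = π (ψ v) := by
      intro v
      have h1 : qg.symm (g v) = Submodule.Quotient.mk v :=
        (LinearEquiv.symm_apply_eq qg).mpr (hqg v).symm
      show (Submodule.liftQ (LinearMap.ker g) (π ∘ₗ ψ) hkill) (qg.symm (g v)) = π (ψ v)
      rw [h1, Submodule.liftQ_apply, LinearMap.comp_apply]
    refine ⟨n, promoteQuot (Ideal.span {x}) eS, F, promoteQuot (Ideal.span {x}) gS,
      ?_, ?_, ?_, ?_⟩
    · -- injectivity of e
      intro a b hab
      obtain ⟨v, rfl⟩ := hg a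
      obtain ⟨w, rfl⟩ := hg b
      simp only [promoteQuot_apply, heS] at hab
      have h0 : π (ψ (v - w)) = 0 := by
        rw [map_sub, map_sub, hab, sub_self]
      obtain ⟨u, hu⟩ := (hπzero _).mp h0
      have h1 : ψ (v - w) = ψ (f u) := by rw [hψf, hu]
      have hveq : v - w = f u := hψinj h1
      have h2 : g (v - w) = 0 := by
        rw [← LinearMap.mem_ker, ← hfg, hveq]
        exact LinearMap.mem_range_self f u
      rw [map_sub, sub_eq_zero] at h2
      exact h2
    · -- surjectivity of h
      intro a
      obtain ⟨v, rfl⟩ := hg a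
      exact ⟨π v, hgS v⟩
    · -- range e = ker F
      ext w
      simp only [LinearMap.mem_range, LinearMap.mem_ker]
      constructor
      · rintro ⟨a, rfl⟩
        obtain ⟨v, rfl⟩ := hg a
        rw [promoteQuot_apply, heS, hFπ, hfψ]
        exact (hπzero _).mpr ⟨v, rfl⟩
      · intro hw
        obtain ⟨v, rfl⟩ := hπsurj w
        rw [hFπ] at hw
        obtain ⟨u, hu⟩ := (hπzero _).mp hw
        have h1 : f v = f (ψ u) := by rw [hfψ, hu]
        have hveq : v = ψ u := hf h1
        exact ⟨g u, by rw [promoteQuot_apply, heS, hveq]⟩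
    · -- range F = ker h
      ext w
      simp only [LinearMap.mem_range, LinearMap.mem_ker]
      constructor
      · rintro ⟨w', rfl⟩
        obtain ⟨v, rfl⟩ := hπsurj w'
        rw [hFπ, promoteQuot_apply, hgS]
        have h1 : f v ∈ LinearMap.ker g := hfg ▸ LinearMap.mem_range_self f v
        exact h1
      · intro hw
        obtain ⟨v, rfl⟩ := hπsurj w
        rw [promoteQuot_apply, hgS] at hw
        have h1 : v ∈ LinearMap.range f := by rw [hfg]; exact hw
        obtain ⟨u, rfl⟩ := h1
        exact ⟨π u, hFπ u⟩
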